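/- Let y* ∈ [0,1] be a zero of h. For any ε > 0 and any integer k with k ≥ 24(H_1+H_2)/(ε·min{H_1, H_2}), one has the event inclusions {Z_k − y* ≤ ε/2} ⊆ {Z_{k+1} − y* ≤ (3/4)ε} and {Z_k − y* ≥ −ε/2} ⊆ {Z_{k+1} − y* ≥ −(3/4)ε}. -/

import Mathlib

open MeasureTheory Filter Set

/-- One-step event inclusions for the proportion process Z around a zero y* of h. -/
theorem one_step_event_inclusions
    (H11 H12 H21 H22 : ℝ)
    (hH11 : 0 ≤ H11) (hH22 : 0 ≤ H22) (hH12 : 0 < H12) (hH21 : 0 < H21)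
    (H1 H2 : ℝ) (hH1 : H1 = H11 + H21) (hH2 : H2 = H12 + H22) (hHne : H1 ≠ H2)
    (f : ℝ → ℝ)
    (hf_cont : ContinuousOn f (Set.Icc 0 1))
    (hf_mono : MonotoneOn f (Set.Icc 0 1))
    (hf_diff : DifferentiableOn ℝ f (Set.Icc 0 1))
    (hf0 : f 0 = 0) (hf1 : f 1 = 1)
    (hf_pos : ∀ x ∈ Set.Ioc (0:ℝ) 1, 0 < f x)
    (h : ℝ → ℝ)
    (hh : ∀ y, h y =
      ((H11 - y * H1) * f y + (H12 - y * H2) * f (1 - y)) / (f y + f (1 - y)))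
    {Ω : Type*} {m0 : MeasurableSpace Ω} {ℙ : Measure Ω} [IsProbabilityMeasure ℙ]
    (ℱ : Filtration ℕ m0)
    (X : ℕ → Ω → Bool)
    (hX_meas : ∀ n : ℕ, Measurable[ℱ (n + 1)] (X (n + 1)))
    (Y1 Y2 : ℕ → Ω → ℝ)
    (hY1_meas : ∀ n : ℕ, Measurable[ℱ n] (Y1 n))
    (hY2_meas : ∀ n : ℕ, Measurable[ℱ n] (Y2 n))
    (hY1_ge : ∀ n ω, 1 ≤ Y1 n ω) (hY2_ge : ∀ n ω, 1 ≤ Y2 n ω)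
    (T : ℕ → Ω → ℝ) (hT : ∀ n ω, T n ω = Y1 n ω + Y2 n ω)
    (hdraw1 : ∀ n : ℕ,
      ℙ[(fun ω => if X (n + 1) ω then (1 : ℝ) else 0) | ℱ n]
        =ᵐ[ℙ] fun ω => f (Y1 n ω / T n ω) / (f (Y1 n ω / T n ω) + f (Y2 n ω / T n ω)))
    (hdraw2 : ∀ n : ℕ,
      ℙ[(fun ω => if X (n + 1) ω then (0 : ℝ) else 1) | ℱ n]
        =ᵐ[ℙ] fun ω => f (Y2 n ω / T n ω) / (f (Y1 n ω / T n ω) + f (Y2 n ω / T n ω)))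
    (hupd1 : ∀ n ω, Y1 (n + 1) ω = Y1 n ω + (if X (n + 1) ω then H11 else H12))
    (hupd2 : ∀ n ω, Y2 (n + 1) ω = Y2 n ω + (if X (n + 1) ω then H21 else H22))
    (Z : ℕ → Ω → ℝ) (hZ : ∀ n ω, Z n ω = Y1 n ω / T n ω)
    (L : ℕ → Ω → ℝ)
    (hL : ∀ n ω, L (n + 1) ω =
      if X (n + 1) ω then H11 - Z n ω * H1 else H12 - Z n ω * H2)
    (ΔM : ℕ → Ω → ℝ)
    (hΔM : ∀ n : ℕ, ΔM (n + 1) = L (n + 1) - ℙ[L (n + 1) | ℱ n])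
    (ystar : ℝ) (hy_mem : ystar ∈ Set.Icc (0:ℝ) 1) (hy_zero : h ystar = 0) :
    ∀ ε > (0:ℝ), ∀ k : ℕ, 24 * (H1 + H2) / (ε * min H1 H2) ≤ (k : ℝ) →
      {ω | Z k ω - ystar ≤ ε / 2} ⊆ {ω | Z (k + 1) ω - ystar ≤ 3 / 4 * ε} ∧
      {ω | -(ε / 2) ≤ Z k ω - ystar} ⊆ {ω | -(3 / 4 * ε) ≤ Z (k + 1) ω - ystar} := by

  have hH1pos : 0 < H1 := by rw [hH1]; linarith
  have hH2pos : 0 < H2 := by rw [hH2]; linarith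
  have hminpos : 0 < min H1 H2 := lt_min hH1pos hH2pos
  have hTgrow : ∀ (n : ℕ) (ω : Ω), 2 + (n : ℝ) * min H1 H2 ≤ T n ω := by
    intro n ω
    induction n with
    | zero =>
      have h1 := hY1_ge 0 ω; have h2 := hY2_ge 0 ω
      simp [hT]; linarith
    | succ n ih =>
      have hstep : T (n+1) ω = T n ω + (if X (n+1) ω then H1 else H2) := by
        rw [hT, hupd1, hupd2, hT]
        split
        · rw [hH1]; ring
        · rw [hH2]; ring
      have hmin : min H1 H2 ≤ (if X (n+1) ω then H1 else H2) := by
        split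
        · exact min_le_left _ _
        · exact min_le_right _ _
      rw [hstep]; push_cast; linarith
  intro ε hε k hk
  have key : ∀ ω, |Z (k+1) ω - Z k ω| ≤ ε / 4 := by
    intro ω
    have h1 := hY1_ge k ω; have h2 := hY2_ge k ω
    have ht : 0 < T k ω := by rw [hT]; linarith
    have ht' : T k ω ≠ 0 := ne_of_gt ht
    have htH1 : T k ω + H1 ≠ 0 := by positivity
    have htH2 : T k ω + H2 ≠ 0 := by positivity
    have hz0 : 0 ≤ Z k ω := by rw [hZ]; positivity
    have hz1 : Z k ω ≤ 1 := by
      rw [hZ, div_le_one ht, hT]; linarith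
    have hT1 : T (k+1) ω = T k ω + (if X (k+1) ω then H1 else H2) := by
      rw [hT, hupd1, hupd2, hT]
      split
      · rw [hH1]; ring
      · rw [hH2]; ring
    have hT1pos : 0 < T (k+1) ω := by
      rw [hT1]; split <;> linarith
    have hdiff : Z (k+1) ω - Z k ω =
        (if X (k+1) ω then H11 - Z k ω * H1 else H12 - Z k ω * H2) / T (k+1) ω := by
      by_cases hx : X (k+1) ω = true
      · simp only [hZ, hT1, hupd1, hx, if_true]
        rw [hH1]; field_simp; ring
      · simp only [hZ, hT1, hupd1, hx, Bool.false_eq_true, if_false]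
        rw [hH2]; field_simp; ring
    have hnum : |(if X (k+1) ω then H11 - Z k ω * H1 else H12 - Z k ω * H2)| ≤ H1 + H2 := by
      rw [abs_le]
      constructor
      · split <;> nlinarith
      · split <;> nlinarith
    have hkmin : 24 * (H1 + H2) ≤ ε * min H1 H2 * k := by
      have := (div_le_iff₀ (by positivity : (0:ℝ) < ε * min H1 H2)).mp hk
      linarith
    have hTk : 24 * (H1 + H2) ≤ ε * T (k+1) ω := by
      have hg := hTgrow (k+1) ω
      have hkT : (k : ℝ) * min H1 H2 ≤ T (k+1) ω := by
        push_cast at hg; nlinarith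
      nlinarith [mul_le_mul_of_nonneg_left hkT (le_of_lt hε)]
    rw [hdiff, abs_div, abs_of_pos hT1pos, div_le_iff₀ hT1pos]
    have hring : ε / 4 * T (k+1) ω = ε * T (k+1) ω / 4 := by ring
    rw [hring]
    linarith
  constructor
  · intro ω hω
    simp only [Set.mem_setOf_eq] at hω ⊢
    have := key ω
    rw [abs_le] at this
    linarith [this.2]
  · intro ω hω
    simp only [Set.mem_setOf_eq] at hω ⊢
    have := key ω
    rw [abs_le] at this
    linarith [this.1]
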